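/- Let σ : A → A⁺ be a tame substitution. Then there is a constant C such that for all n ≥ 1 and all a ∈ A_l, every factor of σⁿ(a) that consists only of letters from A_s and occurs strictly between two occurrences of letters of A_l has length at most C (i.e., sup_n gap(n) < ∞). -/

import Mathlib

namespace SubstMin

variable {A : Type*}

/-- Apply a map `σ : A → A⁺` to a word by concatenation. -/
def substW (σ : A → List A) (w : List A) : List A := w.flatMap σ

/-- `n`-th iterate of the substitution applied to a word. -/
def substIter (σ : A → List A) (n : ℕ) (w : List A) : List A := (substW σ)^[n] w

/-- The set `A_l` of letters `a` with `|σⁿ(a)| → ∞`. -/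
def longLetters (σ : A → List A) : Set A :=
  {a | Filter.Tendsto (fun n => (substIter σ n [a]).length) Filter.atTop Filter.atTop}

/-- The set `A_s = A \ A_l`. -/
def shortLetters (σ : A → List A) : Set A := (longLetters σ)ᶜ

/-- `σ` is a substitution: letters map to nonempty words and `A_l ≠ ∅`. -/
def IsSubstitution (σ : A → List A) : Prop :=
  (∀ a, σ a ≠ []) ∧ (longLetters σ).Nonempty

/-- The language `L(σ)`: factors of some `σⁿ(a)`, `n ≥ 1`. -/
def lang (σ : A → List A) : Set (List A) :=
  {w | ∃ (a : A) (n : ℕ), 1 ≤ n ∧ w <:+: substIter σ n [a]}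

/-- The finite factor `x[s,t]` of a bi-infinite sequence. -/
def factorOf (x : ℤ → A) (s t : ℤ) : List A :=
  (List.range (t - s + 1).toNat).map fun i => x (s + (i : ℤ))

/-- The substitution dynamical system `X_σ`. -/
def XSub (σ : A → List A) : Set (ℤ → A) :=
  {x | ∀ s t : ℤ, s ≤ t → factorOf x s t ∈ lang σ}

/-- The left shift `T`. -/
def shiftT (x : ℤ → A) : ℤ → A := fun i => x (i + 1)

/-- A subshift is minimal if it is nonempty and has no nonempty proper closed
shift-invariant subset. -/
def IsMinimalSubshift [TopologicalSpace A] (X : Set (ℤ → A)) : Prop :=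
  X.Nonempty ∧ ∀ Y : Set (ℤ → A), Y ⊆ X → Y.Nonempty → IsClosed Y →
    shiftT '' Y = Y → Y = X

/-- `a ∈ A_l` is left isolated: `σⁿ(a) = u a w` with `u ∈ A_s⁺`, `w ∈ A*`. -/
def LeftIsolated (σ : A → List A) (a : A) : Prop :=
  ∃ n : ℕ, 1 ≤ n ∧ ∃ u w : List A, u ≠ [] ∧ (∀ b ∈ u, b ∈ shortLetters σ) ∧
    substIter σ n [a] = u ++ a :: w

/-- `a ∈ A_l` is right isolated: `σᵐ(a) = w a u` with `u ∈ A_s⁺`, `w ∈ A*`. -/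
def RightIsolated (σ : A → List A) (a : A) : Prop :=
  ∃ n : ℕ, 1 ≤ n ∧ ∃ u w : List A, u ≠ [] ∧ (∀ b ∈ u, b ∈ shortLetters σ) ∧
    substIter σ n [a] = w ++ a :: u

/-- `σ` is tame: no letter of `A_l` is left or right isolated. -/
def Tame (σ : A → List A) : Prop :=
  ∀ a ∈ longLetters σ, ¬ LeftIsolated σ a ∧ ¬ RightIsolated σ a

/-- `σ` is `l`-primitive. -/
def LPrimitive (σ : A → List A) : Prop :=
  ∃ n : ℕ, 1 ≤ n ∧ ∀ a ∈ longLetters σ, ∀ b ∈ longLetters σ, a ∈ substIter σ n [b]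

/-- `a → b` : `b` occurs in `σⁿ(a)` for some `n ≥ 1`. -/
def arrow (σ : A → List A) (a b : A) : Prop :=
  ∃ n : ℕ, 1 ≤ n ∧ b ∈ substIter σ n [a]

/-- `A_{∘,l} = {a ∈ A_l | a → a}`. -/
def circLong (σ : A → List A) : Set A := {a | a ∈ longLetters σ ∧ arrow σ a a}

/-- `A_{min,l}`: letters of `A_l` minimal in `A_l`. -/
def minLong (σ : A → List A) : Set A :=
  {a | a ∈ longLetters σ ∧ ∀ b ∈ longLetters σ, arrow σ a b → arrow σ b a}

/-- `x` is a periodic point of the shift. -/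
def IsPeriodicPoint (x : ℤ → A) : Prop := ∃ p : ℕ, 1 ≤ p ∧ shiftT^[p] x = x

/-- `X` is a single periodic orbit. -/
def IsSinglePeriodicOrbit (X : Set (ℤ → A)) : Prop :=
  ∃ x : ℤ → A, IsPeriodicPoint x ∧ X = Set.range fun i : ℤ => fun j => x (j + i)

/-- `y = σ(x)` : `y` is obtained from `x` by applying `σ` to each coordinate and
concatenating, with `σ(x(0))` placed starting at coordinate `0`. -/
def IsSubstImage (σ : A → List A) (x y : ℤ → A) : Prop :=
  ∃ o : ℤ → ℤ, o 0 = 0 ∧ (∀ i : ℤ, o (i + 1) = o i + (σ (x i)).length) ∧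
    ∀ i : ℤ, factorOf y (o i) (o (i + 1) - 1) = σ (x i)

/-- The map `s` on nonempty subsets of `A_l`: `s(F) = ⋃_{a ∈ F} (Lett(σ(a)) ∩ A_l)`. -/
def sMap (σ : A → List A) (F : Set A) : Set A :=
  {b | b ∈ longLetters σ ∧ ∃ a ∈ F, b ∈ σ a}

end SubstMin
namespace SubstMin

variable {A : Type*}

open List Filter

theorem substW_nil (σ : A → List A) : substW σ [] = [] := rfl
theorem substW_cons (σ : A → List A) (a : A) (w : List A) :
    substW σ (a :: w) = σ a ++ substW σ w := by simp [substW]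
theorem substW_append (σ : A → List A) (u v : List A) :
    substW σ (u ++ v) = substW σ u ++ substW σ v := by simp [substW]
theorem substW_singleton (σ : A → List A) (a : A) : substW σ [a] = σ a := by simp [substW]

theorem substIter_zero (σ : A → List A) (w : List A) : substIter σ 0 w = w := rfl
theorem substIter_succ (σ : A → List A) (n : ℕ) (w : List A) :
    substIter σ (n+1) w = substIter σ n (substW σ w) := Function.iterate_succ_apply _ _ _
theorem substIter_succ' (σ : A → List A) (n : ℕ) (w : List A) :
    substIter σ (n+1) w = substW σ (substIter σ n w) := Function.iterate_succ_apply' _ _ _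

theorem substIter_append (σ : A → List A) (n : ℕ) (u v : List A) :
    substIter σ n (u ++ v) = substIter σ n u ++ substIter σ n v := by
  induction n generalizing u v with
  | zero => rfl
  | succ n ih => rw [substIter_succ, substW_append, ih, substIter_succ, substIter_succ]

theorem substIter_nil (σ : A → List A) (n : ℕ) : substIter σ n [] = [] := by
  induction n with
  | zero => rfl
  | succ n ih => rw [substIter_succ, substW_nil]; exact ih

theorem substIter_flatMap (σ : A → List A) (n : ℕ) (l : List A) :
    substIter σ n l = l.flatMap (fun d => substIter σ n [d]) := by
  induction l with
  | nil => simp [substIter_nil]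
  | cons a t ih =>
    have h : (a :: t) = [a] ++ t := rfl
    rw [h, substIter_append, ih]; simp

theorem length_le_substW (σ : A → List A) (hne : ∀ a, σ a ≠ []) (w : List A) :
    w.length ≤ (substW σ w).length := by
  induction w with
  | nil => simp [substW_nil]
  | cons a t ih =>
    rw [substW_cons, List.length_append, List.length_cons]
    have := List.length_pos_iff.mpr (hne a)
    omega

theorem length_le_substIter (σ : A → List A) (hne : ∀ a, σ a ≠ []) (n : ℕ) (w : List A) :
    w.length ≤ (substIter σ n w).length := by
  induction n with
  | zero => simp [substIter_zero]
  | succ n ih => rw [substIter_succ']; exact le_trans ih (length_le_substW σ hne _)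

theorem monotone_length_substIter (σ : A → List A) (hne : ∀ a, σ a ≠ []) (w : List A) :
    Monotone fun n => (substIter σ n w).length :=
  monotone_nat_of_le_succ fun n => by
    rw [substIter_succ']; exact length_le_substW σ hne _

theorem long_of_mem_subst (σ : A → List A) {a b : A} (hb : b ∈ σ a)
    (hbl : b ∈ longLetters σ) : a ∈ longLetters σ := by
  obtain ⟨s, t, hst⟩ := List.append_of_mem hb
  have key : ∀ n, (substIter σ n [b]).length ≤ (substIter σ (n+1) [a]).length := by
    intro n
    rw [substIter_succ, substW_singleton, hst]
    have h : s ++ b :: t = s ++ [b] ++ t := by simp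
    rw [h, substIter_append, substIter_append]
    simp [List.length_append]
    omega
  have hbl' : Tendsto (fun n => (substIter σ n [b]).length) atTop atTop := hbl
  have h1 : Tendsto (fun n => (substIter σ (n+1) [a]).length) atTop atTop :=
    tendsto_atTop_mono key hbl'
  exact (tendsto_add_atTop_iff_nat 1).mp h1

theorem long_of_mem_iter (σ : A → List A) :
    ∀ (n : ℕ) {a b : A}, b ∈ substIter σ n [a] → b ∈ longLetters σ → a ∈ longLetters σ := by
  intro n
  induction n with
  | zero =>
    intro a b hb hbl
    rw [substIter_zero, List.mem_singleton] at hb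
    rwa [hb] at hbl
  | succ n ih =>
    intro a b hb hbl
    rw [substIter_succ'] at hb
    have hb' : b ∈ (substIter σ n [a]).flatMap σ := hb
    rw [List.mem_flatMap] at hb'
    obtain ⟨e, he, hbe⟩ := hb'
    exact ih he (long_of_mem_subst σ hbe hbl)

theorem short_of_short (σ : A → List A) {a : A} (ha : a ∈ shortLetters σ) {n : ℕ} {b : A}
    (hb : b ∈ substIter σ n [a]) : b ∈ shortLetters σ :=
  fun hbl => ha (long_of_mem_iter σ n hb hbl)

theorem short_word_of_short (σ : A → List A) {w : List A}
    (hw : ∀ d ∈ w, d ∈ shortLetters σ) {n : ℕ} {b : A}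
    (hb : b ∈ substIter σ n w) : b ∈ shortLetters σ := by
  rw [substIter_flatMap, List.mem_flatMap] at hb
  obtain ⟨e, he, hbe⟩ := hb
  exact short_of_short σ (hw e he) hbe

theorem exists_short_bound (σ : A → List A) [Fintype A] (hne : ∀ a, σ a ≠ []) :
    ∃ K : ℕ, ∀ a ∈ shortLetters σ, ∀ n, (substIter σ n [a]).length ≤ K := by
  have h1 : ∀ a : A, ∃ K, a ∈ shortLetters σ → ∀ n, (substIter σ n [a]).length ≤ K := by
    intro a
    by_cases ha : a ∈ shortLetters σ
    · have hnt : ¬ Tendsto (fun n => (substIter σ n [a]).length) atTop atTop := ha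
      by_contra hK
      push_neg at hK
      refine hnt (Filter.tendsto_atTop_atTop_of_monotone
        (monotone_length_substIter σ hne [a]) fun b => ?_)
      obtain ⟨-, n, hn⟩ := hK b
      exact ⟨n, hn.le⟩
    · exact ⟨0, fun h => absurd h ha⟩
  choose K hK using h1
  exact ⟨Finset.univ.sup K, fun a ha n =>
    le_trans (hK a ha n) (Finset.le_sup (Finset.mem_univ a))⟩

theorem length_substIter_short (σ : A → List A) {K : ℕ}
    (hK : ∀ a ∈ shortLetters σ, ∀ n, (substIter σ n [a]).length ≤ K)
    {w : List A} (hw : ∀ d ∈ w, d ∈ shortLetters σ) (n : ℕ) :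
    (substIter σ n w).length ≤ K * w.length := by
  induction w with
  | nil => simp [substIter_nil]
  | cons a t ih =>
    have h : (a :: t) = [a] ++ t := rfl
    rw [h, substIter_append, List.length_append]
    have h1 := hK a (hw a (by simp)) n
    have h2 := ih fun d hd => hw d (by simp [hd])
    have h3 : ([a] ++ t).length = t.length + 1 := by simp
    rw [h3, Nat.mul_succ]
    omega

theorem exists_long_mem (σ : A → List A) [Fintype A] (hne : ∀ a, σ a ≠ []) {a : A}
    (ha : a ∈ longLetters σ) : ∃ b ∈ σ a, b ∈ longLetters σ := by
  by_contra h
  push_neg at h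
  obtain ⟨K, hK⟩ := exists_short_bound σ hne
  have hb : ∀ n, (substIter σ (n+1) [a]).length ≤ K * (σ a).length := by
    intro n
    rw [substIter_succ, substW_singleton]
    exact length_substIter_short σ hK (fun d hd => h d hd) n
  have ha' : Tendsto (fun n => (substIter σ n [a]).length) atTop atTop := ha
  obtain ⟨n, hn1, hn2⟩ :=
    ((ha'.eventually_gt_atTop (K * (σ a).length)).and (eventually_ge_atTop 1)).exists
  obtain ⟨m, rfl⟩ : ∃ m, n = m + 1 := ⟨n - 1, by omega⟩
  have := hb m
  omega

open Classical in
noncomputable def shortP (σ : A → List A) : A → Bool := fun b => decide (b ∈ shortLetters σ)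

theorem shortP_iff (σ : A → List A) {b : A} : shortP σ b = true ↔ b ∈ shortLetters σ := by
  simp [shortP]

noncomputable def pW (σ : A → List A) (a : A) : List A := (σ a).takeWhile (shortP σ)
noncomputable def fA (σ : A → List A) (a : A) : A := ((σ a).dropWhile (shortP σ)).headD a

theorem split_sigma (σ : A → List A) [Fintype A] (hne : ∀ a, σ a ≠ []) {a : A}
    (ha : a ∈ longLetters σ) :
    ∃ t, σ a = pW σ a ++ fA σ a :: t ∧ (∀ d ∈ pW σ a, d ∈ shortLetters σ) ∧
      fA σ a ∈ longLetters σ := by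
  have hd : (σ a).dropWhile (shortP σ) ≠ [] := by
    intro h
    rw [List.dropWhile_eq_nil_iff] at h
    obtain ⟨b, hb, hbl⟩ := exists_long_mem σ hne ha
    exact ((shortP_iff σ).mp (h b hb)) hbl
  have hhead : fA σ a = ((σ a).dropWhile (shortP σ)).head hd := by
    rw [fA, List.headD_eq_head?, List.head?_eq_head hd, Option.getD_some]
  refine ⟨((σ a).dropWhile (shortP σ)).tail, ?_, ?_, ?_⟩
  · conv_lhs => rw [← List.takeWhile_append_dropWhile (p := shortP σ) (l := σ a)]
    rw [hhead, List.cons_head_tail]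
    rfl
  · intro d hd'
    exact (shortP_iff σ).mp (List.mem_takeWhile_imp hd')
  · have := List.head_dropWhile_not (shortP σ) hd
    rw [← hhead] at this
    have h2 : fA σ a ∉ shortLetters σ := fun hs => by
      rw [(shortP_iff σ).mpr hs] at this; simp at this
    exact Set.notMem_compl_iff.mp h2

theorem fA_iter_long (σ : A → List A) [Fintype A] (hne : ∀ a, σ a ≠ []) :
    ∀ (n : ℕ) {a : A}, a ∈ longLetters σ → (fA σ)^[n] a ∈ longLetters σ := by
  intro n
  induction n with
  | zero => intro a ha; exact ha
  | succ n ih =>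
    intro a ha
    rw [Function.iterate_succ_apply]
    obtain ⟨t, -, -, h⟩ := split_sigma σ hne ha
    exact ih h

theorem struct (σ : A → List A) [Fintype A] (hne : ∀ a, σ a ≠ []) :
    ∀ (n : ℕ), ∀ a ∈ longLetters σ, ∃ u v : List A,
      substIter σ (n+1) [a] = u ++ (fA σ)^[n+1] a :: v ∧
      (∀ d ∈ u, d ∈ shortLetters σ) ∧
      u.length = ∑ i ∈ Finset.range (n+1),
        (substIter σ (n - i) (pW σ ((fA σ)^[i] a))).length := by
  intro n
  induction n with
  | zero =>
    intro a ha
    obtain ⟨t, h1, h2, _⟩ := split_sigma σ hne ha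
    refine ⟨pW σ a, t, ?_, h2, ?_⟩
    · rw [substIter_succ, substIter_zero, substW_singleton, h1, Function.iterate_one]
    · simp [substIter_zero]
  | succ n ih =>
    intro a ha
    obtain ⟨t, h1, h2, h3⟩ := split_sigma σ hne ha
    obtain ⟨u', v', g1, g2, g3⟩ := ih (fA σ a) h3
    refine ⟨substIter σ (n+1) (pW σ a) ++ u', v' ++ substIter σ (n+1) t, ?_, ?_, ?_⟩
    · rw [substIter_succ, substW_singleton, h1]
      have hsplit : pW σ a ++ fA σ a :: t = pW σ a ++ ([fA σ a] ++ t) := by simp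
      rw [hsplit, substIter_append, substIter_append, g1,
        Function.iterate_succ_apply (fA σ) (n+1) a]
      simp [List.append_assoc]
    · intro d hd
      rcases List.mem_append.mp hd with hd' | hd'
      · exact short_word_of_short σ h2 hd'
      · exact g2 d hd'
    · rw [List.length_append, g3]
      conv_rhs => rw [Finset.sum_range_succ']
      have hterm : ∀ i ∈ Finset.range (n+1),
          (substIter σ (n + 1 - (i+1)) (pW σ ((fA σ)^[i+1] a))).length
          = (substIter σ (n - i) (pW σ ((fA σ)^[i] (fA σ a)))).length := by
        intro i _
        rw [Nat.succ_sub_succ, Function.iterate_succ_apply]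
      rw [Finset.sum_congr rfl hterm]
      simp [Nat.add_comm]


theorem split_unique (σ : A → List A) {u₁ u₂ v₁ v₂ : List A} {b₁ b₂ : A}
    (h : u₁ ++ b₁ :: v₁ = u₂ ++ b₂ :: v₂)
    (h₁ : ∀ d ∈ u₁, d ∈ shortLetters σ) (h₂ : ∀ d ∈ u₂, d ∈ shortLetters σ)
    (hb₁ : b₁ ∈ longLetters σ) (hb₂ : b₂ ∈ longLetters σ) : u₁ = u₂ := by
  have key : ∀ (x₁ x₂ y₁ y₂ : List A) (c₁ c₂ : A), x₁ ++ c₁ :: y₁ = x₂ ++ c₂ :: y₂ →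
      (∀ d ∈ x₂, d ∈ shortLetters σ) → c₁ ∈ longLetters σ → ¬ x₁.length < x₂.length := by
    intro x₁ x₂ y₁ y₂ c₁ c₂ hh hs hc hlt
    have hlen : x₁.length < (x₂ ++ c₂ :: y₂).length := by
      rw [List.length_append]; omega
    have e1 : (x₁ ++ c₁ :: y₁)[x₁.length]'(by rw [hh]; exact hlen) = c₁ := by
      rw [List.getElem_append_right (le_refl _)]
      simp
    have e2 : (x₂ ++ c₂ :: y₂)[x₁.length]'hlen = x₂[x₁.length] :=
      List.getElem_append_left hlt
    have e3 : c₁ ∈ x₂ := by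
      have : (x₁ ++ c₁ :: y₁)[x₁.length]'(by rw [hh]; exact hlen)
          = (x₂ ++ c₂ :: y₂)[x₁.length]'hlen := by
        congr 1
      rw [e1, e2] at this
      rw [this]
      exact List.getElem_mem _
    exact hs c₁ e3 hc
  have l1 := key u₁ u₂ v₁ v₂ b₁ b₂ h h₂ hb₁
  have l2 := key u₂ u₁ v₂ v₁ b₂ b₁ h.symm h₁ hb₂
  exact (List.append_inj h (by omega)).1

theorem pW_eq_nil_of_cycle (σ : A → List A) [Fintype A] (hne : ∀ a, σ a ≠ [])
    (hL : ∀ a ∈ longLetters σ, ¬ LeftIsolated σ a)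
    {c : A} {k : ℕ} (hc : c ∈ longLetters σ) (hk : 1 ≤ k) (hcyc : (fA σ)^[k] c = c) :
    pW σ c = [] := by
  by_contra hp
  obtain ⟨m, rfl⟩ : ∃ m, k = m + 1 := ⟨k - 1, by omega⟩
  obtain ⟨u, v, h1, h2, h3⟩ := struct σ hne m c hc
  rw [hcyc] at h1
  have hu : u ≠ [] := by
    have term : 1 ≤ (substIter σ (m - 0) (pW σ ((fA σ)^[0] c))).length := by
      simp only [Function.iterate_zero, id_eq, Nat.sub_zero]
      have hh1 := length_le_substIter σ hne m (pW σ c)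
      have hh2 := List.length_pos_iff.mpr hp
      omega
    have hle := Finset.single_le_sum
      (f := fun i => (substIter σ (m - i) (pW σ ((fA σ)^[i] c))).length)
      (fun i _ => Nat.zero_le _) (Finset.mem_range.mpr (Nat.succ_pos m))
    have hle' : (substIter σ (m - 0) (pW σ ((fA σ)^[0] c))).length
        ≤ ∑ i ∈ Finset.range (m+1), (substIter σ (m - i) (pW σ ((fA σ)^[i] c))).length := hle
    have hulen : 0 < u.length := by rw [h3]; omega
    exact List.ne_nil_of_length_pos hulen
  exact hL c hc ⟨m + 1, by omega, u, v, hu, h2, h1⟩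

theorem prefix_bound (σ : A → List A) [Fintype A] (hne : ∀ a, σ a ≠ [])
    (hL : ∀ a ∈ longLetters σ, ¬ LeftIsolated σ a) :
    ∃ P : ℕ, ∀ n, 1 ≤ n → ∀ a ∈ longLetters σ, ∀ (u : List A) (b : A) (v : List A),
      substIter σ n [a] = u ++ b :: v → (∀ d ∈ u, d ∈ shortLetters σ) →
      b ∈ longLetters σ → u.length ≤ P := by
  classical
  obtain ⟨K, hK⟩ := exists_short_bound σ hne
  set M := Finset.univ.sup fun a : A => (σ a).length with hMdef
  refine ⟨Fintype.card A * (K * M), ?_⟩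
  intro n hn a ha u b v heq hu hb
  obtain ⟨m, rfl⟩ : ∃ m, n = m + 1 := ⟨n - 1, by omega⟩
  obtain ⟨u₀, v₀, h1, h2, h3⟩ := struct σ hne m a ha
  have hbl : (fA σ)^[m+1] a ∈ longLetters σ := fA_iter_long σ hne (m+1) ha
  have hueq : u = u₀ := split_unique σ (heq.symm.trans h1) hu h2 hb hbl
  rw [hueq, h3]
  set D := (Finset.range (m+1)).filter (fun i => pW σ ((fA σ)^[i] a) ≠ []) with hD
  have hsum : ∑ i ∈ Finset.range (m+1),
      (substIter σ (m - i) (pW σ ((fA σ)^[i] a))).length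
      = ∑ i ∈ D, (substIter σ (m - i) (pW σ ((fA σ)^[i] a))).length := by
    refine (Finset.sum_filter_of_ne ?_).symm
    intro i _ hne'
    intro hnil
    rw [hnil, substIter_nil] at hne'
    simp at hne'
  have hterm : ∀ i ∈ D, (substIter σ (m - i) (pW σ ((fA σ)^[i] a))).length ≤ K * M := by
    intro i _
    have hshort : ∀ d ∈ pW σ ((fA σ)^[i] a), d ∈ shortLetters σ := by
      intro d hd
      exact (shortP_iff σ).mp (List.mem_takeWhile_imp hd)
    calc (substIter σ (m - i) (pW σ ((fA σ)^[i] a))).length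
        ≤ K * (pW σ ((fA σ)^[i] a)).length := length_substIter_short σ hK hshort _
      _ ≤ K * M := by
          refine Nat.mul_le_mul_left _ ?_
          calc (pW σ ((fA σ)^[i] a)).length
              ≤ (σ ((fA σ)^[i] a)).length := (List.takeWhile_sublist _).length_le
            _ ≤ M := Finset.le_sup (f := fun a : A => (σ a).length) (Finset.mem_univ _)
  have hinj : ∀ i ∈ D, ∀ j ∈ D, i < j → ((fA σ)^[i] a ≠ (fA σ)^[j] a) := by
    intro i hi j hj hij heq'
    have hc : (fA σ)^[i] a ∈ longLetters σ := fA_iter_long σ hne i ha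
    have hcyc : (fA σ)^[j - i] ((fA σ)^[i] a) = (fA σ)^[i] a := by
      rw [← Function.iterate_add_apply]
      have : j - i + i = j := by omega
      rw [this, ← heq']
    have := pW_eq_nil_of_cycle σ hne hL hc (by omega) hcyc
    rw [hD, Finset.mem_filter] at hi
    exact hi.2 this
  have hcard : D.card ≤ Fintype.card A := by
    rw [← Finset.card_univ]
    refine Finset.card_le_card_of_injOn (fun i => (fA σ)^[i] a)
      (fun _ _ => Finset.mem_univ _) ?_
    intro i hi j hj hij
    by_contra hne'
    rcases Nat.lt_or_ge i j with hlt | hge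
    · exact hinj i hi j hj hlt hij
    · exact hinj j hj i hi (by omega) hij.symm
  calc ∑ i ∈ Finset.range (m+1), (substIter σ (m - i) (pW σ ((fA σ)^[i] a))).length
      = ∑ i ∈ D, (substIter σ (m - i) (pW σ ((fA σ)^[i] a))).length := hsum
    _ ≤ D.card * (K * M) := by
        have := Finset.sum_le_card_nsmul D _ (K * M) hterm
        simpa [smul_eq_mul] using this
    _ ≤ Fintype.card A * (K * M) := Nat.mul_le_mul_right _ hcard


def revSub (σ : A → List A) : A → List A := fun a => (σ a).reverse

theorem substW_rev (σ : A → List A) (w : List A) :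
    substW (revSub σ) w.reverse = (substW σ w).reverse := by
  induction w with
  | nil => rfl
  | cons a t ih =>
    rw [List.reverse_cons, substW_append, ih]
    simp [substW, revSub, List.reverse_append]

theorem substIter_rev (σ : A → List A) (n : ℕ) :
    ∀ w : List A, substIter (revSub σ) n w.reverse = (substIter σ n w).reverse := by
  induction n with
  | zero => intro w; rfl
  | succ n ih =>
    intro w
    rw [substIter_succ, substIter_succ, substW_rev]
    exact ih (substW σ w)

theorem long_rev (σ : A → List A) : longLetters (revSub σ) = longLetters σ := by
  ext a
  simp only [longLetters, Set.mem_setOf_eq]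
  have h : ∀ n, (substIter (revSub σ) n [a]).length = (substIter σ n [a]).length := by
    intro n
    have := substIter_rev σ n [a]
    rw [List.reverse_singleton] at this
    rw [this, List.length_reverse]
  exact Filter.tendsto_congr h
  -- note direction of congr

theorem short_rev (σ : A → List A) : shortLetters (revSub σ) = shortLetters σ := by
  rw [shortLetters, long_rev]; rfl

theorem right_of_left_rev (σ : A → List A) {a : A}
    (h : LeftIsolated (revSub σ) a) : RightIsolated σ a := by
  obtain ⟨n, hn, u, w, hu, hus, heq⟩ := h
  have hIter : (substIter σ n [a]).reverse = u ++ a :: w := by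
    rw [← heq, ← substIter_rev σ n [a], List.reverse_singleton]
  have heq2 : substIter σ n [a] = w.reverse ++ a :: u.reverse := by
    have := congrArg List.reverse hIter
    rw [List.reverse_reverse] at this
    rw [this]
    simp
  refine ⟨n, hn, u.reverse, w.reverse, by simp [hu], ?_, heq2⟩
  intro b hb
  have hbu : b ∈ u := List.mem_reverse.mp hb
  have := hus b hbu
  rwa [short_rev σ] at this

theorem suffix_bound (σ : A → List A) [Fintype A] (hne : ∀ a, σ a ≠ [])
    (hR : ∀ a ∈ longLetters σ, ¬ RightIsolated σ a) :
    ∃ S : ℕ, ∀ n, 1 ≤ n → ∀ a ∈ longLetters σ, ∀ (u : List A) (b : A) (v : List A),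
      substIter σ n [a] = u ++ b :: v → (∀ d ∈ v, d ∈ shortLetters σ) →
      b ∈ longLetters σ → v.length ≤ S := by
  have hne' : ∀ a, revSub σ a ≠ [] := fun a => by
    simp [revSub, hne a]
  have hL' : ∀ a ∈ longLetters (revSub σ), ¬ LeftIsolated (revSub σ) a := by
    intro a ha hli
    rw [long_rev] at ha
    exact hR a ha (right_of_left_rev σ hli)
  obtain ⟨P, hP⟩ := prefix_bound (revSub σ) hne' hL'
  refine ⟨P, fun n hn a ha u b v heq hv hb => ?_⟩
  have h2 : substIter (revSub σ) n [a] = v.reverse ++ b :: u.reverse := by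
    have h := substIter_rev σ n [a]
    rw [List.reverse_singleton, heq] at h
    rw [h]
    simp
  have ha' : a ∈ longLetters (revSub σ) := by rw [long_rev]; exact ha
  have hb' : b ∈ longLetters (revSub σ) := by rw [long_rev]; exact hb
  have hv' : ∀ d ∈ v.reverse, d ∈ shortLetters (revSub σ) := by
    intro d hd
    rw [short_rev]
    exact hv d (List.mem_reverse.mp hd)
  have := hP n hn a ha' v.reverse b u.reverse h2 hv' hb'
  simpa using this

theorem flat_split {g : A → List A} : ∀ (l u v : List A) (b : A),
    l.flatMap g = u ++ b :: v →
    ∃ l₁ d l₂ u₁ u₂, l = l₁ ++ d :: l₂ ∧ g d = u₁ ++ b :: u₂ ∧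
      u = l₁.flatMap g ++ u₁ ∧ v = u₂ ++ l₂.flatMap g := by
  intro l
  induction l with
  | nil =>
    intro u v b h
    simp only [List.flatMap_nil] at h
    exact absurd h.symm (List.append_ne_nil_of_right_ne_nil _ (by simp))
  | cons a t ih =>
    intro u v b h
    rw [List.flatMap_cons] at h
    rcases List.append_eq_append_iff.mp h with ⟨w, hw1, hw2⟩ | ⟨w, hw1, hw2⟩
    · obtain ⟨l₁, d, l₂, u₁, u₂, e1, e2, e3, e4⟩ := ih w v b hw2
      exact ⟨a :: l₁, d, l₂, u₁, u₂, by rw [e1, List.cons_append], e2,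
        by rw [hw1, e3, List.flatMap_cons, List.append_assoc], e4⟩
    · cases w with
      | nil =>
        rw [List.nil_append] at hw2
        obtain ⟨l₁, d, l₂, u₁, u₂, e1, e2, e3, e4⟩ := ih [] v b hw2.symm
        refine ⟨a :: l₁, d, l₂, u₁, u₂, by rw [e1, List.cons_append], e2, ?_, e4⟩
        rw [List.flatMap_cons, List.append_assoc, ← e3, List.append_nil]
        simpa using hw1.symm
      | cons c w' =>
        rw [List.cons_append] at hw2
        injection hw2 with hb hv
        refine ⟨[], a, t, u, w', rfl, ?_, by simp, hv⟩
        rw [hw1, hb]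


theorem gap_bound (σ : A → List A) [Fintype A] (hne : ∀ a, σ a ≠ [])
    (hL : ∀ a ∈ longLetters σ, ¬ LeftIsolated σ a)
    (hR : ∀ a ∈ longLetters σ, ¬ RightIsolated σ a) :
    ∃ C : ℕ, ∀ n : ℕ, 1 ≤ n → ∀ a ∈ longLetters σ,
      ∀ (u v w : List A) (b c : A),
        b ∈ longLetters σ → c ∈ longLetters σ →
        (∀ d ∈ w, d ∈ shortLetters σ) →
        substIter σ n [a] = u ++ b :: (w ++ c :: v) →
        w.length ≤ C := by
  classical
  obtain ⟨K, hK⟩ := exists_short_bound σ hne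
  obtain ⟨P, hP⟩ := prefix_bound σ hne hL
  obtain ⟨S, hS⟩ := suffix_bound σ hne hR
  set M := Finset.univ.sup fun a : A => (σ a).length with hMdef
  refine ⟨S + K * M + P + M, ?_⟩
  suffices key : ∀ n : ℕ, ∀ a ∈ longLetters σ, ∀ (u v w : List A) (b c : A),
      b ∈ longLetters σ → c ∈ longLetters σ → (∀ d ∈ w, d ∈ shortLetters σ) →
      substIter σ n [a] = u ++ b :: (w ++ c :: v) → w.length ≤ S + K * M + P + M by
    intro n _ a ha u v w b c hb hc hw heq
    exact key n a ha u v w b c hb hc hw heq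
  intro n
  induction n with
  | zero =>
    intro a ha u v w b c hb hc hw heq
    rw [substIter_zero] at heq
    have := congrArg List.length heq
    simp [List.length_append] at this
    omega
  | succ n ih =>
    intro a ha u v w b c hb hc hw heq
    have hMa : (σ a).length ≤ M :=
      Finset.le_sup (f := fun a : A => (σ a).length) (Finset.mem_univ a)
    by_cases hn0 : n = 0
    · subst hn0
      rw [substIter_succ, substIter_zero, substW_singleton] at heq
      have := congrArg List.length heq
      simp [List.length_append] at this
      omega
    · have hn1 : 1 ≤ n := by omega
      have heq' : (σ a).flatMap (fun d => substIter σ n [d]) = u ++ b :: (w ++ c :: v) := by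
        rw [← substIter_flatMap]
        have h0 : substIter σ (n+1) [a] = substIter σ n (σ a) := by
          rw [substIter_succ, substW_singleton]
        rw [← h0]
        exact heq
      obtain ⟨l₁, d₁, l₂, u₁, u₂, e1, e2, e3, e4⟩ := flat_split (σ a) u (w ++ c :: v) b heq'
      have hbd : b ∈ substIter σ n [d₁] := by rw [e2]; simp
      have hd₁ : d₁ ∈ longLetters σ := long_of_mem_iter σ n hbd hb
      by_cases hcase : w.length < u₂.length
      · -- c occurs inside u₂, i.e. inside the image of d₁
        have h5 : (w ++ c :: v).take u₂.length = u₂ := by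
          rw [e4, List.take_left]
        have hu₂ : u₂ = w ++ c :: v.take (u₂.length - w.length - 1) := by
          have hq : u₂.length - w.length = (u₂.length - w.length - 1) + 1 := by omega
          have h5' := h5.symm
          rw [List.take_append,
            List.take_of_length_le (by omega : w.length ≤ u₂.length), hq,
            List.take_succ_cons] at h5'
          exact h5'
        rw [hu₂] at e2
        exact ih d₁ hd₁ u₁ (v.take (u₂.length - w.length - 1)) w b c hb hc hw e2
      · push_neg at hcase
        have htake : (w ++ c :: v).take u₂.length = w.take u₂.length := by
          rw [List.take_append]
          have h0 : u₂.length - w.length = 0 := by omega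
          rw [h0, List.take_zero, List.append_nil]
        have hu₂w : u₂ = w.take u₂.length := by
          rw [← htake, e4, List.take_left]
        have hdrop : w.drop u₂.length ++ c :: v
            = l₂.flatMap (fun d => substIter σ n [d]) := by
          have h6 := congrArg (List.drop u₂.length) e4
          rw [List.drop_left, List.drop_append] at h6
          have h0 : u₂.length - w.length = 0 := by omega
          rw [h0, List.drop_zero] at h6
          exact h6
        obtain ⟨m₁, d₂, m₂, t₁, t₂, f1, f2, f3, f4⟩ :=
          flat_split l₂ (w.drop u₂.length) v c hdrop.symm
        have hwdecomp : w = u₂ ++ (m₁.flatMap (fun d => substIter σ n [d]) ++ t₁) := by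
          conv_lhs => rw [← List.take_append_drop u₂.length w]
          rw [← hu₂w, f3]
        have hu₂s : ∀ d ∈ u₂, d ∈ shortLetters σ := by
          intro d hd
          exact hw d (by rw [hwdecomp]; exact List.mem_append_left _ hd)
        have hbd1 : u₂.length ≤ S := hS n hn1 d₁ hd₁ u₁ b u₂ e2 hu₂s hb
        have hcd : c ∈ substIter σ n [d₂] := by rw [f2]; simp
        have hd₂ : d₂ ∈ longLetters σ := long_of_mem_iter σ n hcd hc
        have ht₁s : ∀ d ∈ t₁, d ∈ shortLetters σ := by
          intro d hd
          refine hw d ?_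
          rw [hwdecomp]
          exact List.mem_append_right _ (List.mem_append_right _ hd)
        have hbd3 : t₁.length ≤ P := hP n hn1 d₂ hd₂ t₁ c t₂ f2 ht₁s hc
        have hm₁s : ∀ e ∈ m₁, e ∈ shortLetters σ := by
          intro e he
          by_contra hel
          have helong : e ∈ longLetters σ := Set.notMem_compl_iff.mp hel
          obtain ⟨m', rfl⟩ : ∃ m', n = m' + 1 := ⟨n - 1, by omega⟩
          obtain ⟨u', v', g1, g2, g3⟩ := struct σ hne m' e helong
          have hmem1 : (fA σ)^[m'+1] e ∈ substIter σ (m'+1) [e] := by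
            rw [g1]; simp
          have hmem2 : (fA σ)^[m'+1] e ∈ w := by
            rw [hwdecomp]
            refine List.mem_append_right _ (List.mem_append_left _ ?_)
            exact List.mem_flatMap.mpr ⟨e, he, hmem1⟩
          exact (hw _ hmem2) (fA_iter_long σ hne (m'+1) helong)
        have hm₁len : m₁.length ≤ M := by
          have h7 : (σ a).length = l₁.length + 1 + (m₁.length + 1 + m₂.length) := by
            rw [e1, f1]
            simp [List.length_append]
            omega
          omega
        have hmid : (m₁.flatMap (fun d => substIter σ n [d])).length ≤ K * M := by
          rw [← substIter_flatMap]
          calc (substIter σ n m₁).length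
              ≤ K * m₁.length := length_substIter_short σ hK hm₁s n
            _ ≤ K * M := Nat.mul_le_mul_left _ hm₁len
        have h8 := congrArg List.length hwdecomp
        rw [List.length_append, List.length_append] at h8
        omega

end SubstMin

/-- For a tame substitution the internal `A_s`-gaps between occurrences
of letters of `A_l` in all `σⁿ(a)` (`a ∈ A_l`, `n ≥ 1`) are uniformly bounded. -/
theorem statement10 {A : Type*} [Fintype A] (σ : A → List A)
    (hσ : SubstMin.IsSubstitution σ) (htame : SubstMin.Tame σ) :
    ∃ C : ℕ, ∀ n : ℕ, 1 ≤ n → ∀ a ∈ SubstMin.longLetters σ,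
      ∀ (u v w : List A) (b c : A),
        b ∈ SubstMin.longLetters σ → c ∈ SubstMin.longLetters σ →
        (∀ d ∈ w, d ∈ SubstMin.shortLetters σ) →
        SubstMin.substIter σ n [a] = u ++ b :: (w ++ c :: v) →
        w.length ≤ C := by
  obtain ⟨hne, -⟩ := hσ
  have hL : ∀ a ∈ SubstMin.longLetters σ, ¬ SubstMin.LeftIsolated σ a :=
    fun a ha => (htame a ha).1
  have hR : ∀ a ∈ SubstMin.longLetters σ, ¬ SubstMin.RightIsolated σ a :=
    fun a ha => (htame a ha).2
  obtain ⟨C, hC⟩ := SubstMin.gap_bound σ hne hL hR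
  exact ⟨C, hC⟩
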